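/- arXiv:2205.14894 — 2 statements merged into one kernel-verified Lean document; each statement's English description precedes it below -/
import Mathlib

section
/- For all real x > 2, 1 - 2/x⁴ > (2 - 2^{1/x}) · 2^{1/x}. -/
theorem ineq_one_sub_two_div_pow_four (x : ℝ) (hx : 2 < x) :
    1 - 2 / x ^ 4 > (2 - (2 : ℝ) ^ (1 / x)) * (2 : ℝ) ^ (1 / x) := by
  have hx0 : (0:ℝ) < x := by linarith
  set u : ℝ := Real.log 2 * (1 / x) with hu
  have hupos : 0 < u := by
    have := Real.log_pos (by norm_num : (1:ℝ) < 2)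
    positivity
  have ht : (2:ℝ) ^ (1 / x) = Real.exp u := Real.rpow_def_of_pos (by norm_num) _
  have hexp : 1 + u + u ^ 2 / 2 ≤ Real.exp u := Real.quadratic_le_exp_of_nonneg hupos.le
  rw [ht]
  have hlog : 0.6931471803 < Real.log 2 := Real.log_two_gt_d9
  have hx4 : (0:ℝ) < x ^ 4 := by positivity
  have hu2 : u * x = Real.log 2 := by rw [hu, mul_assoc, one_div_mul_cancel hx0.ne', mul_one]
  have key : 2 / x ^ 4 < (Real.exp u - 1) ^ 2 := by
    rw [div_lt_iff₀ hx4]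
    have h1 : u + u ^ 2 / 2 ≤ Real.exp u - 1 := by linarith
    have hx2 : (0:ℝ) < x ^ 2 := by positivity
    have h2 : (u + u ^ 2 / 2) * x ^ 2 = Real.log 2 * x + (Real.log 2) ^ 2 / 2 := by
      have : (u + u ^ 2 / 2) * x ^ 2 = (u * x) * x + (u * x) ^ 2 / 2 := by ring
      rw [this, hu2]
    have h3 : (1.626 : ℝ) < Real.log 2 * x + (Real.log 2) ^ 2 / 2 := by nlinarith
    have h4 : (1.626 : ℝ) < (Real.exp u - 1) * x ^ 2 := by nlinarith
    nlinarith [h4]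
  nlinarith [key]
end

section
/- For all real x > 0, (1 - 2^{-1/x}) · 2^{2/x} > 1/x². -/
lemma exp_gt_div_logsq (u : ℝ) (hu : 0 < u) :
    u / (Real.log 2) ^ 2 < Real.exp u := by
  have hL : 0 < Real.log 2 := Real.log_pos one_lt_two
  set c : ℝ := ((Real.log 2) ^ 2)⁻¹ with hc
  have hcpos : 0 < c := by positivity
  -- exp u = c * exp (u - log c)
  have h1 : (u - Real.log c) + 1 ≤ Real.exp (u - Real.log c) := Real.add_one_le_exp _
  have h2 : Real.exp u = c * Real.exp (u - Real.log c) := by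
    rw [Real.exp_sub, Real.exp_log hcpos]
    field_simp
  -- log c < 1 since c < e
  have hce : c < Real.exp 1 := by
    have hl : (0.6931471803 : ℝ) < Real.log 2 := Real.log_two_gt_d9
    have he : (2.7182818283 : ℝ) < Real.exp 1 := Real.exp_one_gt_d9
    rw [hc, inv_lt_iff_one_lt_mul₀ (by positivity)]
    nlinarith
  have hlogc : Real.log c < 1 := by
    have := Real.log_lt_log hcpos hce
    simpa [Real.log_exp] using this
  have h3 : Real.exp u ≥ c * ((u - Real.log c) + 1) := by
    rw [h2]
    exact mul_le_mul_of_nonneg_left h1 hcpos.le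
  have : c * u < Real.exp u := by nlinarith
  calc u / (Real.log 2) ^ 2 = c * u := by rw [hc]; ring
    _ < Real.exp u := this

theorem ineq_gamma_lower (x : ℝ) (hx : 0 < x) :
    (1 - (2 : ℝ) ^ (-1 / x)) * (2 : ℝ) ^ (2 / x) > 1 / x ^ 2 := by
  have h2 : (0:ℝ) < 2 := by norm_num
  rw [Real.rpow_def_of_pos h2, Real.rpow_def_of_pos h2]
  have hL : 0 < Real.log 2 := Real.log_pos one_lt_two
  set u : ℝ := Real.log 2 / x with hu
  have hupos : 0 < u := by positivity
  have e1 : Real.log 2 * (-1 / x) = -u := by rw [hu]; ring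
  have e2 : Real.log 2 * (2 / x) = u + u := by rw [hu]; ring
  rw [e1, e2]
  have hx2 : (1 : ℝ) / x ^ 2 = u^2 / (Real.log 2)^2 := by
    rw [hu]; field_simp
  rw [hx2]
  have hepos : 0 < Real.exp u := Real.exp_pos u
  have key : u / (Real.log 2)^2 < Real.exp u := exp_gt_div_logsq u hupos
  have h4 : u + 1 ≤ Real.exp u := Real.add_one_le_exp u
  have hlhs : (1 - Real.exp (-u)) * Real.exp (u + u)
      = Real.exp u * Real.exp u - Real.exp u := by
    rw [Real.exp_add, Real.exp_neg]
    field_simp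
  rw [hlhs]
  have h5 : u * (u / (Real.log 2)^2) < u * Real.exp u :=
    (mul_lt_mul_iff_right₀ hupos).mpr key
  have h6 : u * (u / Real.log 2 ^ 2) = u ^ 2 / Real.log 2 ^ 2 := by ring
  have h7 : Real.exp u * (u + 1) ≤ Real.exp u * Real.exp u :=
    mul_le_mul_of_nonneg_left h4 hepos.le
  nlinarith [h5, h6, h7]
end
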